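/- Let A ∈ ℝ^{n×n}, B ∈ ℝ^{n×q}, let D ∈ ℝ^{(n+q)×(n+q)} be symmetric positive definite, let M := [[−(A+A^T), B],[B^T, 0]], and suppose X ∈ ℝ^{n×n}, Y ∈ ℝ^{q×n} satisfy [X;Y]^T D [X;Y] = I_n and M [X;Y] = D [X;Y] Λ for a diagonal positive definite Λ ∈ ℝ^{n×n}. Then X is nonsingular and K := Y X^{-1} satisfies that (A−BK)+(A−BK)^T is negative definite. -/

import Mathlib

open Matrix

private lemma dot_transpose_mulVec {n m : ℕ} (X : Matrix (Fin n) (Fin m) ℝ)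
    (v : Fin m → ℝ) (u : Fin n → ℝ) :
    v ⬝ᵥ (Xᵀ *ᵥ u) = (X *ᵥ v) ⬝ᵥ u := by
  rw [dotProduct_mulVec, vecMul_transpose]

/-- if `[X;Y]ᵀ D [X;Y] = I` and `M [X;Y] = D [X;Y] Λ` with `D`
symmetric positive definite and `Λ` diagonal positive definite, then `X` is nonsingular
and `K = Y X⁻¹` is a dissipating feedback. -/
theorem pencil_eigvecs_give_dissipating_K {n q : ℕ}
    (A : Matrix (Fin n) (Fin n) ℝ) (B : Matrix (Fin n) (Fin q) ℝ)
    (D : Matrix (Fin n ⊕ Fin q) (Fin n ⊕ Fin q) ℝ) (hD : D.PosDef)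
    (X : Matrix (Fin n) (Fin n) ℝ) (Y : Matrix (Fin q) (Fin n) ℝ)
    (horth : (Matrix.fromRows X Y)ᵀ * D * Matrix.fromRows X Y = 1)
    (d : Fin n → ℝ) (hd : ∀ i, 0 < d i)
    (heig : Matrix.fromBlocks (-(A + Aᵀ)) B Bᵀ 0 * Matrix.fromRows X Y =
      D * Matrix.fromRows X Y * Matrix.diagonal d) :
    IsUnit X.det ∧
      ∀ x : Fin n → ℝ, x ≠ 0 →
        x ⬝ᵥ (((A - B * (Y * X⁻¹)) + (A - B * (Y * X⁻¹))ᵀ) *ᵥ x) < 0 := by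
  have hdiagPD : (Matrix.diagonal d).PosDef := Matrix.PosDef.diagonal hd
  -- key identity: VᵀMV = Λ
  have hkey : (Matrix.fromRows X Y)ᵀ * (Matrix.fromBlocks (-(A + Aᵀ)) B Bᵀ 0) *
      Matrix.fromRows X Y = Matrix.diagonal d := by
    rw [Matrix.mul_assoc, heig, ← Matrix.mul_assoc, ← Matrix.mul_assoc, horth,
      Matrix.one_mul]
  have hkey2 : Xᵀ * (-(A + Aᵀ) * X + B * Y) + Yᵀ * (Bᵀ * X)
      = Matrix.diagonal d := by
    have h := hkey
    rw [Matrix.transpose_fromRows, Matrix.mul_assoc, Matrix.fromBlocks_mul_fromRows,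
      Matrix.fromCols_mul_fromRows] at h
    simpa using h
  -- X is invertible
  have hXdet : IsUnit X.det := by
    by_contra h
    have hdet0 : X.det = 0 := by
      rcases eq_or_ne X.det 0 with h0 | h0
      · exact h0
      · exact absurd (isUnit_iff_ne_zero.mpr h0) h
    obtain ⟨v, hv0, hXv⟩ := (Matrix.exists_mulVec_eq_zero_iff).mpr hdet0
    have hpos : 0 < v ⬝ᵥ (Matrix.diagonal d *ᵥ v) := by
      have := hdiagPD.dotProduct_mulVec_pos hv0
      simpa using this
    rw [← hkey2, Matrix.add_mulVec, dotProduct_add] at hpos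
    have h1 : v ⬝ᵥ ((Xᵀ * (-(A + Aᵀ) * X + B * Y)) *ᵥ v) = 0 := by
      rw [← Matrix.mulVec_mulVec, dot_transpose_mulVec, hXv, zero_dotProduct]
    have h2 : v ⬝ᵥ ((Yᵀ * (Bᵀ * X)) *ᵥ v) = 0 := by
      rw [← Matrix.mulVec_mulVec, ← Matrix.mulVec_mulVec, hXv]
      simp
    rw [h1, h2] at hpos
    simp at hpos
  refine ⟨hXdet, fun x hx => ?_⟩
  have hXinv : X⁻¹ * X = 1 := Matrix.nonsing_inv_mul X hXdet
  have hXinv' : X * X⁻¹ = 1 := Matrix.mul_nonsing_inv X hXdet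
  set K := Y * X⁻¹ with hK
  -- Xᵀ * ((A - B*K) + (A - B*K)ᵀ) * X = -(diagonal d)
  have hmain : Xᵀ * ((A - B * K) + (A - B * K)ᵀ) * X = -(Matrix.diagonal d) := by
    have hKX : K * X = Y := by rw [hK, Matrix.mul_assoc, hXinv, Matrix.mul_one]
    have hXtKt : Xᵀ * Kᵀ = Yᵀ := by rw [← Matrix.transpose_mul, hKX]
    calc Xᵀ * ((A - B * K) + (A - B * K)ᵀ) * X
        = Xᵀ * (A + Aᵀ) * X - Xᵀ * (B * (K * X)) - (Xᵀ * Kᵀ) * (Bᵀ * X) := by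
          simp only [Matrix.transpose_add, Matrix.transpose_sub, Matrix.transpose_mul,
            Matrix.mul_sub, Matrix.sub_mul, Matrix.mul_add, Matrix.add_mul, Matrix.mul_assoc]
          abel
      _ = Xᵀ * (A + Aᵀ) * X - Xᵀ * (B * Y) - Yᵀ * (Bᵀ * X) := by rw [hKX, hXtKt]
      _ = -(Matrix.diagonal d) := by
          rw [← hkey2]
          simp only [Matrix.neg_mul, Matrix.mul_neg, Matrix.mul_add, Matrix.add_mul,
            Matrix.mul_sub, Matrix.sub_mul, Matrix.mul_assoc]
          abel
  set v := X⁻¹ *ᵥ x with hv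
  have hxv : X *ᵥ v = x := by
    rw [hv, Matrix.mulVec_mulVec, hXinv', Matrix.one_mulVec]
  have hv0 : v ≠ 0 := by
    intro h0
    apply hx
    rw [← hxv, h0, Matrix.mulVec_zero]
  have hpos : 0 < v ⬝ᵥ (Matrix.diagonal d *ᵥ v) := by simpa using hdiagPD.dotProduct_mulVec_pos hv0
  have : v ⬝ᵥ ((Xᵀ * ((A - B * K) + (A - B * K)ᵀ) * X) *ᵥ v)
      = x ⬝ᵥ (((A - B * K) + (A - B * K)ᵀ) *ᵥ x) := by
    rw [← Matrix.mulVec_mulVec, ← Matrix.mulVec_mulVec, dot_transpose_mulVec, hxv]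
  rw [← this, hmain, Matrix.neg_mulVec, dotProduct_neg]
  linarith
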